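/- Let $x, y \in \mathbb{R}^m$ with $y_l = 1$ for all $l$ (so $\mathbf{1}^\top y = m$), and let $e \in \mathbb{R}^m$ with $e_{\max} := \max_l |e_l| < 1$. Then the ratio $z = \frac{(\mathbf{1}^\top + e^\top)x}{(\mathbf{1}^\top + e^\top)y}$ satisfies $|z - z^*| \le \frac{z^*(\Sigma_x + \Sigma_{|x|})\,e_{\max}}{\Sigma_x(1 - e_{\max})}$, where $z^* = \Sigma_x/m$, provided $\Sigma_x = \sum_l x_l > 0$. -/

import Mathlib

/-- Bound on the perturbed ratio: with `y = 1` and `|e_l| ≤ e_max < 1`, the ratio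
`z = ((1ᵀ+eᵀ)x)/((1ᵀ+eᵀ)y)` satisfies
`|z - z*| ≤ z*(Σ_x + Σ_{|x|}) e_max / (Σ_x (1 - e_max))`, where `z* = Σ_x/m`. -/
theorem perturbed_ratio_error_bound
    (m : ℕ) (hm : 0 < m)
    (x : Fin m → ℝ) (e : Fin m → ℝ) (emax : ℝ)
    (hemax : IsGreatest {r : ℝ | ∃ l, r = |e l|} emax)
    (hemax1 : emax < 1)
    (hx : 0 < ∑ l, x l) :
    |(∑ l, (1 + e l) * x l) / (∑ l, (1 + e l) * 1) - (∑ l, x l) / m| ≤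
      ((∑ l, x l) / m) * ((∑ l, x l) + ∑ l, |x l|) * emax /
        ((∑ l, x l) * (1 - emax)) := by
  set S := ∑ l, x l with hS
  set A := ∑ l, |x l| with hA
  set N := ∑ l, (1 + e l) * x l with hN
  set D := ∑ l, (1 + e l) * 1 with hD
  have hle : ∀ l, |e l| ≤ emax := fun l => hemax.2 ⟨l, rfl⟩
  have hemax0 : 0 ≤ emax := by
    obtain ⟨l, hl⟩ := hemax.1
    rw [hl]; exact abs_nonneg _
  have hm' : (0 : ℝ) < m := Nat.cast_pos.mpr hm
  have hAnn : 0 ≤ A := Finset.sum_nonneg fun l _ => abs_nonneg _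
  have hE : |∑ l, e l| ≤ m * emax := by
    calc |∑ l, e l| ≤ ∑ l, |e l| := Finset.abs_sum_le_sum_abs _ _
      _ ≤ ∑ _l : Fin m, emax := Finset.sum_le_sum fun l _ => hle l
      _ = m * emax := by simp [Finset.sum_const, Finset.card_univ, mul_comm]
  have hDeq : D = m + ∑ l, e l := by
    simp only [hD, mul_one, Finset.sum_add_distrib, Finset.sum_const,
      Finset.card_univ, Fintype.card_fin, nsmul_eq_mul, mul_one]
  have hmb : (m : ℝ) * (1 - emax) ≤ D := by
    rw [hDeq]
    have := neg_abs_le (∑ l, e l)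
    nlinarith
  have hDpos : 0 < D := by nlinarith
  have hex : |∑ l, e l * x l| ≤ emax * A := by
    calc |∑ l, e l * x l| ≤ ∑ l, |e l * x l| := Finset.abs_sum_le_sum_abs _ _
      _ ≤ ∑ l, emax * |x l| := Finset.sum_le_sum fun l _ => by
          rw [abs_mul]; exact mul_le_mul_of_nonneg_right (hle l) (abs_nonneg _)
      _ = emax * A := by rw [hA, Finset.mul_sum]
  have hNeq : N = S + ∑ l, e l * x l := by
    simp only [hN, hS, add_mul, one_mul, Finset.sum_add_distrib]
  have hkey : N * m - D * S = m * (∑ l, e l * x l) - S * (∑ l, e l) := by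
    rw [hNeq, hDeq]; ring
  have hnum : |N * m - D * S| ≤ m * emax * (A + S) := by
    rw [hkey]
    calc |(m : ℝ) * (∑ l, e l * x l) - S * (∑ l, e l)|
        ≤ |(m : ℝ) * (∑ l, e l * x l)| + |S * (∑ l, e l)| := abs_sub _ _
      _ = m * |∑ l, e l * x l| + S * |∑ l, e l| := by
          rw [abs_mul, abs_mul, abs_of_pos hm', abs_of_pos hx]
      _ ≤ m * (emax * A) + S * (m * emax) := by
          gcongr
      _ = m * emax * (A + S) := by ring
  calc |N / D - S / (m : ℝ)| = |N * m - D * S| / (D * m) := by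
        rw [div_sub_div _ _ (ne_of_gt hDpos) (ne_of_gt hm'), abs_div,
          abs_of_pos (mul_pos hDpos hm')]
    _ ≤ (m * emax * (A + S)) / (D * m) := by
        exact div_le_div_of_nonneg_right hnum (le_of_lt (mul_pos hDpos hm'))
    _ = emax * (A + S) / D := by
        field_simp
    _ ≤ emax * (A + S) / ((m : ℝ) * (1 - emax)) := by
        gcongr
        all_goals nlinarith
    _ = S / m * (S + A) * emax / (S * (1 - emax)) := by
        have h1 : (1 : ℝ) - emax ≠ 0 := by nlinarith
        field_simp
        ring
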